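/- arXiv:1704.05214 — 3 statements merged into one kernel-verified Lean document; each statement's English description precedes it below -/
import Mathlib

section
/- Any finite subgroup G of the group of germs of holomorphic diffeomorphisms of (ℂ,0) is conjugate (by an element of the same group) to a subgroup of the linear group {z ↦ az : a ∈ ℂ*}; moreover such G is cyclic. -/
open Filter

private lemma aux_strict {f : ℂ → ℂ} (hf : AnalyticAt ℂ f 0) :
    HasStrictDerivAt f (deriv f 0) 0 := by
  obtain ⟨p, hp⟩ := hf
  have h := hp.hasStrictDerivAt
  rw [h.hasDerivAt.deriv]
  exact h

/-- Left cancellation: an analytic germ with nonzero derivative is injective near `0`. -/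
private lemma aux_linj {f : ℂ → ℂ} (hf : AnalyticAt ℂ f 0)
    (hd : deriv f 0 ≠ 0) {u v : ℂ → ℂ}
    (hu : Filter.Tendsto u (nhds 0) (nhds (0 : ℂ)))
    (hv : Filter.Tendsto v (nhds 0) (nhds (0 : ℂ)))
    (hfe : ∀ᶠ z in nhds 0, f (u z) = f (v z)) : ∀ᶠ z in nhds 0, u z = v z := by
  have hs := (aux_strict hf).hasStrictFDerivAt_equiv hd
  have hli := hs.eventually_left_inverse
  filter_upwards [hfe, hu.eventually hli, hv.eventually hli] with z h1 h2 h3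
  rw [← h2, ← h3, h1]

/-- Right cancellation: an analytic germ with nonzero derivative is locally surjective. -/
private lemma aux_rinj {f : ℂ → ℂ} (hf : AnalyticAt ℂ f 0) (h0 : f 0 = 0)
    (hd : deriv f 0 ≠ 0) {u v : ℂ → ℂ}
    (hfe : ∀ᶠ z in nhds 0, u (f z) = v (f z)) : ∀ᶠ w in nhds 0, u w = v w := by
  have hm := (aux_strict hf).map_nhds_eq hd
  rw [h0] at hm
  rw [← hm, Filter.eventually_map]
  exact hfe

/-- Chain rule for germs. -/
private lemma aux_deriv_comp {f g e : ℂ → ℂ} (hf : AnalyticAt ℂ f 0) (hg : AnalyticAt ℂ g 0)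
    (hg0 : g 0 = 0) (he : ∀ᶠ z in nhds 0, e z = f (g z)) :
    deriv e 0 = deriv f 0 * deriv g 0 := by
  have h1 : deriv e 0 = deriv (f ∘ g) 0 := Filter.EventuallyEq.deriv_eq (he.mono fun z hz => hz)
  have hfd : DifferentiableAt ℂ f (g 0) := by rw [hg0]; exact hf.differentiableAt
  rw [h1, deriv_comp 0 hfd hg.differentiableAt, hg0]

/-- Any finite subgroup `G` of the group of germs at `0` of holomorphic
diffeomorphisms of `(ℂ,0)` — modelled as a finite set of analytic germs fixing `0`
with nonzero derivative, containing pairwise distinct germs and closed under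
composition of germs — is conjugate, by a germ `h` of holomorphic diffeomorphism,
to a subgroup of the linear group `{z ↦ az : a ∈ ℂ*}`; moreover `G` is cyclic. -/
theorem stmt3 (G : Finset (ℂ → ℂ)) (hne : G.Nonempty)
    (han : ∀ f ∈ G, AnalyticAt ℂ f 0 ∧ f 0 = 0 ∧ deriv f 0 ≠ 0)
    (hcomp : ∀ f ∈ G, ∀ g ∈ G, ∃ h ∈ G, ∀ᶠ z in nhds (0 : ℂ), h z = f (g z))
    (hsep : ∀ f ∈ G, ∀ g ∈ G, (∀ᶠ z in nhds (0 : ℂ), f z = g z) → f = g) :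
    (∃ h : ℂ → ℂ, AnalyticAt ℂ h 0 ∧ h 0 = 0 ∧ deriv h 0 ≠ 0 ∧
      ∀ f ∈ G, ∃ a : ℂ, a ≠ 0 ∧ ∀ᶠ z in nhds (0 : ℂ), h (f z) = a * h z) ∧
    (∃ g ∈ G, ∀ f ∈ G, ∃ n : ℕ, ∀ᶠ z in nhds (0 : ℂ), f z = g^[n] z) := by
  classical
  choose! E hEG hEev using hcomp
  have hconv : ∀ f ∈ G, Filter.Tendsto f (nhds 0) (nhds (0 : ℂ)) := by
    intro f hf
    have h := (han f hf).1.continuousAt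
    rw [ContinuousAt, (han f hf).2.1] at h
    exact h
  have hEd : ∀ f ∈ G, ∀ g ∈ G, deriv (E f g) 0 = deriv f 0 * deriv g 0 := fun f hf g hg =>
    aux_deriv_comp (han f hf).1 (han g hg).1 (han g hg).2.1 (hEev f hf g hg)
  -- right-composition cancellation
  have hinj_r : ∀ f ∈ G, ∀ g₁ ∈ G, ∀ g₂ ∈ G, E g₁ f = E g₂ f → g₁ = g₂ := by
    intro f hf g₁ h₁ g₂ h₂ heq
    refine hsep g₁ h₁ g₂ h₂ ?_
    refine aux_rinj (han f hf).1 (han f hf).2.1 (han f hf).2.2 ?_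
    have e1 := hEev g₁ h₁ f hf
    have e2 := hEev g₂ h₂ f hf
    rw [heq] at e1
    filter_upwards [e1, e2] with z a b
    rw [← a, ← b]
  -- the averaged linearizing map
  set h : ℂ → ℂ := fun z => ∑ f ∈ G, (deriv f 0)⁻¹ * f z with hh
  have hha : AnalyticAt ℂ h 0 := by
    rw [hh]
    exact G.analyticAt_fun_sum (fun f hf => analyticAt_const.mul (han f hf).1)
  have hh0 : h 0 = 0 := by
    rw [hh]
    exact Finset.sum_eq_zero fun f hf => by rw [(han f hf).2.1, mul_zero]
  have hcard0 : (G.card : ℂ) ≠ 0 := Nat.cast_ne_zero.2 hne.card_pos.ne'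
  have hhd : deriv h 0 = (G.card : ℂ) := by
    rw [hh]
    rw [deriv_fun_sum (fun f hf => ((han f hf).1.differentiableAt.const_mul _))]
    have hone : ∀ f ∈ G, deriv (fun z => (deriv f 0)⁻¹ * f z) 0 = 1 := fun f hf => by
      rw [deriv_const_mul _ (han f hf).1.differentiableAt, inv_mul_cancel₀ (han f hf).2.2]
    rw [Finset.sum_congr rfl hone, Finset.sum_const, nsmul_eq_mul, mul_one]
  have hhd0 : deriv h 0 ≠ 0 := by rw [hhd]; exact hcard0
  -- linearization
  have hlin : ∀ f ∈ G, ∀ᶠ z in nhds 0, h (f z) = (deriv f 0) * h z := by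
    intro f hf
    have hmem : ∀ g ∈ G, E g f ∈ G := fun g hg => hEG g hg f hf
    have hinj' : ∀ g₁ g₂ (h₁ : g₁ ∈ G) (h₂ : g₂ ∈ G), E g₁ f = E g₂ f → g₁ = g₂ :=
      fun g₁ g₂ h₁ h₂ e => hinj_r f hf g₁ h₁ g₂ h₂ e
    have hsurj := Finset.surj_on_of_inj_on_of_card_le (s := G) (t := G)
        (fun g _ => E g f) (fun g hg => hmem g hg) hinj' le_rfl
    have hsum : ∀ z : ℂ, ∑ g ∈ G, (deriv (E g f) 0)⁻¹ * (E g f) z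
        = ∑ g ∈ G, (deriv g 0)⁻¹ * g z := by
      intro z
      refine Finset.sum_bij (fun g _ => E g f) (fun g hg => hmem g hg)
        (fun g₁ h₁ g₂ h₂ e => hinj' g₁ g₂ h₁ h₂ e) (fun b hb => ?_) (fun g hg => rfl)
      obtain ⟨a, ha, e⟩ := hsurj b hb
      exact ⟨a, ha, e.symm⟩
    have hev : ∀ᶠ z in nhds 0, ∀ g ∈ G, E g f z = g (f z) :=
      (Filter.eventually_all_finset G).2 (fun g hg => hEev g hg f hf)
    filter_upwards [hev] with z hz
    have h1 : h (f z) = ∑ g ∈ G, (deriv g 0)⁻¹ * g (f z) := by rw [hh]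
    have step : ∀ g ∈ G, (deriv g 0)⁻¹ * g (f z)
        = deriv f 0 * ((deriv (E g f) 0)⁻¹ * (E g f) z) := by
      intro g hg
      rw [← hz g hg, hEd g hg f hf, mul_inv]
      have h2 : deriv f 0 ≠ 0 := (han f hf).2.2
      field_simp
    rw [h1, Finset.sum_congr rfl step, ← Finset.mul_sum, hsum, hh]
  -- identity element of G
  obtain ⟨f₀, hf₀⟩ := hne
  have hinj_l : ∀ g₁ g₂ (h₁ : g₁ ∈ G) (h₂ : g₂ ∈ G), E f₀ g₁ = E f₀ g₂ → g₁ = g₂ := by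
    intro g₁ g₂ h₁ h₂ heq
    refine hsep g₁ h₁ g₂ h₂ ?_
    refine aux_linj (han f₀ hf₀).1 (han f₀ hf₀).2.2 (hconv g₁ h₁) (hconv g₂ h₂) ?_
    have e1 := hEev f₀ hf₀ g₁ h₁
    have e2 := hEev f₀ hf₀ g₂ h₂
    rw [heq] at e1
    filter_upwards [e1, e2] with z a b
    rw [← a, ← b]
  have hsurj_l := Finset.surj_on_of_inj_on_of_card_le (s := G) (t := G)
      (fun g _ => E f₀ g) (fun g hg => hEG f₀ hf₀ g hg) hinj_l le_rfl
  obtain ⟨i, hiG, hieq⟩ := hsurj_l f₀ hf₀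
  have hieq' : f₀ = E f₀ i := hieq
  have hid : ∀ᶠ z in nhds 0, i z = z := by
    refine aux_linj (han f₀ hf₀).1 (han f₀ hf₀).2.2 (hconv i hiG) Filter.tendsto_id ?_
    filter_upwards [hEev f₀ hf₀ i hiG] with z a
    rw [← a, ← hieq']
  have hid1 : deriv i 0 = 1 := by
    have h1 : deriv i 0 = deriv (id : ℂ → ℂ) 0 :=
      Filter.EventuallyEq.deriv_eq (hid.mono fun z hz => hz)
    rw [h1, deriv_id]
  -- same derivative implies eventually equal
  have hderiv_inj : ∀ f ∈ G, ∀ g ∈ G, deriv f 0 = deriv g 0 → ∀ᶠ z in nhds 0, f z = g z := by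
    intro f hf g hg he
    refine aux_linj hha hhd0 (hconv f hf) (hconv g hg) ?_
    filter_upwards [hlin f hf, hlin g hg] with z a b
    rw [a, b, he]
  -- the group of multipliers
  set S : Finset ℂ := G.image (fun f => deriv f 0) with hS
  have hSmul : ∀ a ∈ S, ∀ b ∈ S, a * b ∈ S := by
    intro a ha b hb
    rw [hS, Finset.mem_image] at ha hb ⊢
    obtain ⟨f, hf, rfl⟩ := ha
    obtain ⟨g, hg, rfl⟩ := hb
    exact ⟨E f g, hEG f hf g hg, hEd f hf g hg⟩
  have hS1 : (1 : ℂ) ∈ S := by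
    rw [hS, Finset.mem_image]; exact ⟨i, hiG, hid1⟩
  have hpow : ∀ a ∈ S, ∀ k : ℕ, a ^ (k + 1) ∈ S := by
    intro a ha k
    induction k with
    | zero => simpa using ha
    | succ m ih => rw [pow_succ]; exact hSmul _ ih _ ha
  have hSinv : ∀ u : ℂˣ, (u : ℂ) ∈ S → ((u⁻¹ : ℂˣ) : ℂ) ∈ S := by
    intro u hu
    have hmap : ∀ k : ℕ, ((u ^ (k + 1) : ℂˣ) : ℂ) ∈ S := fun k => by
      push_cast; exact hpow _ hu k
    obtain ⟨k1, k2, hk, he⟩ := Finite.exists_ne_map_eq_of_infinite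
      (fun k : ℕ => (⟨((u ^ (k + 1) : ℂˣ) : ℂ), hmap k⟩ : {x // x ∈ S}))
    have he' : u ^ (k1 + 1) = u ^ (k2 + 1) := Units.ext (congrArg Subtype.val he)
    have key : ∀ m k : ℕ, m < k → u ^ (m + 1) = u ^ (k + 1) → ((u⁻¹ : ℂˣ) : ℂ) ∈ S := by
      intro m k hmk heq
      have hd : u ^ (k - m) = 1 := by
        have h1 : u ^ (m + 1) * u ^ (k - m) = u ^ (m + 1) * 1 := by
          rw [mul_one, ← pow_add]
          rw [heq]
          congr 1
          omega
        exact mul_left_cancel h1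
      obtain ⟨e, hde⟩ : ∃ e, k - m = e + 1 := ⟨k - m - 1, by omega⟩
      have hinv : u⁻¹ = u ^ e := by
        apply inv_eq_of_mul_eq_one_right
        rw [← pow_succ']
        rw [← hde, hd]
      cases e with
      | zero => rw [hinv, pow_zero]; simpa using hS1
      | succ j => rw [hinv]; exact hmap j
    rcases Nat.lt_or_ge k1 k2 with hlt | hge
    · exact key k1 k2 hlt he'
    · have hlt : k2 < k1 := by omega
      exact key k2 k1 hlt he'.symm
  let H : Subgroup ℂˣ :=
    { carrier := {u : ℂˣ | (u : ℂ) ∈ S}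
      mul_mem' := fun {a b} ha hb => by
        show ((a * b : ℂˣ) : ℂ) ∈ S
        push_cast
        exact hSmul _ ha _ hb
      one_mem' := by show ((1 : ℂˣ) : ℂ) ∈ S; simpa using hS1
      inv_mem' := fun {u} hu => hSinv u hu }
  haveI : Finite H := Finite.of_injective
    (fun u : H => (⟨((u : ℂˣ) : ℂ), u.2⟩ : {x // x ∈ S}))
    (fun a b hab => Subtype.ext (Units.ext (congrArg Subtype.val hab)))
  haveI : IsCyclic H := subgroup_units_cyclic H
  obtain ⟨gen, hgen⟩ := IsCyclic.exists_monoid_generator (α := H)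
  have hgenS : ((gen : ℂˣ) : ℂ) ∈ S := gen.2
  rw [hS, Finset.mem_image] at hgenS
  obtain ⟨g, hgG, hgd⟩ := hgenS
  refine ⟨⟨h, hha, hh0, hhd0, fun f hf => ⟨deriv f 0, (han f hf).2.2, hlin f hf⟩⟩,
    g, hgG, fun f hf => ?_⟩
  -- iterates of g are (eventually) in G
  have hiter : ∀ m : ℕ, ∃ eN ∈ G,
      (∀ᶠ z in nhds 0, eN z = g^[m] z) ∧ deriv eN 0 = (deriv g 0) ^ m := by
    intro m
    induction m with
    | zero =>
      refine ⟨i, hiG, ?_, by rw [hid1, pow_zero]⟩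
      filter_upwards [hid] with z a
      simpa using a
    | succ m ih =>
      obtain ⟨eN, heNG, heNev, heNd⟩ := ih
      refine ⟨E eN g, hEG eN heNG g hgG, ?_, ?_⟩
      · have h1 := hEev eN heNG g hgG
        have h2 : ∀ᶠ z in nhds 0, eN (g z) = g^[m] (g z) := (hconv g hgG).eventually heNev
        filter_upwards [h1, h2] with z a b
        rw [a, b, ← Function.iterate_succ_apply]
      · rw [hEd eN heNG g hgG, heNd, ← pow_succ]
  have hfd0 : deriv f 0 ≠ 0 := (han f hf).2.2
  have hfS : deriv f 0 ∈ S := by rw [hS]; exact Finset.mem_image_of_mem _ hf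
  have huH : (Units.mk0 (deriv f 0) hfd0) ∈ H := hfS
  obtain ⟨m, hm⟩ := (Submonoid.mem_powers_iff _ _).1 (hgen ⟨Units.mk0 (deriv f 0) hfd0, huH⟩)
  have hfm : deriv f 0 = (deriv g 0) ^ m := by
    have h1 := congrArg (fun x : H => ((x : ℂˣ) : ℂ)) hm
    simp only [SubmonoidClass.coe_pow, Units.val_pow_eq_pow_val, Units.val_mk0] at h1
    rw [← h1, hgd]
  obtain ⟨eN, heNG, heNev, heNd⟩ := hiter m
  have hfe : ∀ᶠ z in nhds 0, f z = eN z :=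
    hderiv_inj f hf eN heNG (by rw [hfm, heNd])
  refine ⟨m, ?_⟩
  filter_upwards [hfe, heNev] with z a b
  rw [a, b]
end

section
/- (Koenigs) If f ∈ Diff(ℂ,0) has linear part f'(0) = a with |a| ≠ 1 and |a| ≠ 0, then f is analytically linearizable: there exists h ∈ Diff(ℂ,0) with h∘f∘h^{-1}(z) = az. -/
open Filter Metric

theorem quad_bound (f : ℂ → ℂ) (hf : AnalyticAt ℂ f 0) (h0 : f 0 = 0)
    (a : ℂ) (ha : deriv f 0 = a) :
    ∃ C > 0, ∃ r0 > 0, ∀ y : ℂ, ‖y‖ ≤ r0 → ‖f y - a * y‖ ≤ C * ‖y‖ ^ 2 := by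
  obtain ⟨p, hp⟩ := hf
  have hO := hp.isBigO_sub_partialSum_pow 2
  have heq : (fun y : ℂ => f (0 + y) - p.partialSum 2 y) = fun y => f y - a * y := by
    funext y
    have h1 : p.partialSum 2 y = (p 0 fun _ => y) + (p 1 fun _ => y) := by
      simp [FormalMultilinearSeries.partialSum, Finset.sum_range_succ]
    have h2 : (p 0 fun _ => y) = f 0 := hp.coeff_zero _
    have h3 : (p 1 fun _ => y) = a * y := by
      have h4 := p.apply_eq_pow_smul_coeff (n := 1) (z := y)
      rw [h4]
      have hc : p.coeff 1 = a := by
        have h5 := hp.deriv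
        rw [ha] at h5
        exact h5.symm
      rw [hc]; simp [smul_eq_mul]; ring
    rw [h1, h2, h3, h0, zero_add]; ring_nf
  rw [heq] at hO
  rw [Asymptotics.isBigO_iff] at hO
  obtain ⟨c, hc⟩ := hO
  rw [Metric.eventually_nhds_iff] at hc
  obtain ⟨ε, hε, hc⟩ := hc
  refine ⟨max c 1, lt_max_of_lt_right one_pos, ε / 2, half_pos hε, fun y hy => ?_⟩
  have := hc (y := y) (by simpa [dist_eq_norm] using hy.trans_lt (half_lt_self hε))
  calc ‖f y - a * y‖ ≤ c * ‖‖y‖ ^ 2‖ := this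
    _ ≤ max c 1 * ‖y‖ ^ 2 := by
        rw [Real.norm_of_nonneg (by positivity)]
        exact mul_le_mul_of_nonneg_right (le_max_left _ _) (by positivity)

theorem koenigs_lt (f : ℂ → ℂ) (hf : AnalyticAt ℂ f 0) (h0 : f 0 = 0)
    (a : ℂ) (ha : deriv f 0 = a) (hlt : ‖a‖ < 1) (ha0 : a ≠ 0) :
    ∃ h : ℂ → ℂ, AnalyticAt ℂ h 0 ∧ h 0 = 0 ∧ deriv h 0 ≠ 0 ∧
      ∀ᶠ z in nhds (0 : ℂ), h (f z) = a * h z := by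
  obtain ⟨C, hC, r0, hr0, hbound⟩ := quad_bound f hf h0 a ha
  set A : ℝ := ‖a‖ with hA
  have hA0 : 0 < A := norm_pos_iff.mpr ha0
  have hAne : A ≠ 0 := ne_of_gt hA0
  obtain ⟨r1, hr1, hdiff⟩ : ∃ r1 > 0, ∀ y : ℂ, ‖y‖ ≤ r1 → DifferentiableAt ℂ f y := by
    have := hf.eventually_analyticAt
    rw [Metric.eventually_nhds_iff] at this
    obtain ⟨ε, hε, hh⟩ := this
    exact ⟨ε / 2, half_pos hε, fun y hy =>
      (hh (by simpa [dist_eq_norm] using hy.trans_lt (half_lt_self hε))).differentiableAt⟩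
  -- choose the radius r
  set δ : ℝ := min ((1 - A) / 2) ((A - A ^ 2) / 4) with hδ
  have hδ0 : 0 < δ := lt_min (by linarith) (by nlinarith)
  have hδ1 : δ ≤ (1 - A) / 2 := min_le_left _ _
  have hδ2 : δ ≤ (A - A ^ 2) / 4 := min_le_right _ _
  set r : ℝ := min (min r0 r1) (δ / C) with hr
  have hrpos : 0 < r := lt_min (lt_min hr0 hr1) (by positivity)
  have hrr0 : r ≤ r0 := le_trans (min_le_left _ _) (min_le_left _ _)
  have hrr1 : r ≤ r1 := le_trans (min_le_left _ _) (min_le_right _ _)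
  have hCr : C * r ≤ δ := by
    rw [mul_comm]
    exact (le_div_iff₀ hC).mp (min_le_right _ _)
  have ht0 : (0:ℝ) ≤ C * r := by positivity
  set c : ℝ := A + C * r with hc
  have hcA : A ≤ c := le_add_of_nonneg_right ht0
  have hc0 : 0 < c := lt_of_lt_of_le hA0 hcA
  have hc1 : c < 1 := by rw [hc]; linarith
  have hc2 : c ^ 2 < A := by
    rw [hc]
    nlinarith [sq_nonneg (A - 1), mul_nonneg ht0 ht0, mul_le_mul hCr hCr ht0 hδ0.le,
      mul_nonneg hA0.le ht0]
  clear_value δ r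
  clear hδ hr hδ1 hδ2 hCr
  -- iterates stay small
  have hfz : ∀ z : ℂ, ‖z‖ ≤ r → ‖f z‖ ≤ c * ‖z‖ := by
    intro z hz
    calc ‖f z‖ = ‖a * z + (f z - a * z)‖ := by ring_nf
      _ ≤ ‖a * z‖ + ‖f z - a * z‖ := norm_add_le _ _
      _ ≤ A * ‖z‖ + C * ‖z‖ ^ 2 := by
          rw [norm_mul]
          exact add_le_add le_rfl (hbound z (hz.trans hrr0))
      _ ≤ A * ‖z‖ + C * r * ‖z‖ := by
          rw [sq]
          nlinarith [norm_nonneg z, mul_le_mul_of_nonneg_right hz (norm_nonneg z)]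
      _ = c * ‖z‖ := by rw [hc]; ring
  clear_value c
  clear hc
  have hiter : ∀ n : ℕ, ∀ z : ℂ, ‖z‖ ≤ r → ‖f^[n] z‖ ≤ c ^ n * ‖z‖ := by
    intro n
    induction n with
    | zero => intro z hz; simp
    | succ n ih =>
      intro z hz
      rw [Function.iterate_succ_apply']
      have h1 : ‖f^[n] z‖ ≤ c ^ n * ‖z‖ := ih z hz
      have h2 : ‖f^[n] z‖ ≤ r := by
        calc ‖f^[n] z‖ ≤ c ^ n * ‖z‖ := h1
          _ ≤ 1 * r := mul_le_mul (pow_le_one₀ hc0.le hc1.le) hz (norm_nonneg z) zero_le_one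
          _ = r := one_mul r
      calc ‖f (f^[n] z)‖ ≤ c * ‖f^[n] z‖ := hfz _ h2
        _ ≤ c * (c ^ n * ‖z‖) := by nlinarith
        _ = c ^ (n + 1) * ‖z‖ := by ring
  have hstay : ∀ n : ℕ, ∀ z : ℂ, ‖z‖ ≤ r → ‖f^[n] z‖ ≤ r := by
    intro n z hz
    calc ‖f^[n] z‖ ≤ c ^ n * ‖z‖ := hiter n z hz
      _ ≤ 1 * r := mul_le_mul (pow_le_one₀ hc0.le hc1.le) hz (norm_nonneg z) zero_le_one
      _ = r := one_mul r
  -- the approximating sequence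
  set H : ℕ → ℂ → ℂ := fun n z => f^[n] z / a ^ n with hH
  set q : ℝ := c ^ 2 / A with hq
  have hq0 : 0 ≤ q := by positivity
  have hq1 : q < 1 := (div_lt_one hA0).mpr hc2
  have h1q : 0 < 1 - q := by linarith
  -- geometric bound
  have hgeom : ∀ z : ℂ, ‖z‖ ≤ r → ∀ n : ℕ,
      dist (H n z) (H (n + 1) z) ≤ (C * ‖z‖ ^ 2 / A) * q ^ n := by
    intro z hz n
    have hw : ‖f^[n] z‖ ≤ c ^ n * ‖z‖ := hiter n z hz
    have hwr : ‖f^[n] z‖ ≤ r := hstay n z hz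
    have key : ‖f (f^[n] z) - a * f^[n] z‖ ≤ C * (c ^ n * ‖z‖) ^ 2 := by
      calc ‖f (f^[n] z) - a * f^[n] z‖ ≤ C * ‖f^[n] z‖ ^ 2 :=
            hbound _ (hwr.trans hrr0)
        _ ≤ C * (c ^ n * ‖z‖) ^ 2 := by
            apply mul_le_mul_of_nonneg_left _ hC.le
            exact pow_le_pow_left₀ (norm_nonneg _) hw 2
    rw [dist_eq_norm, hH]
    have hrewrite : f^[n] z / a ^ n - f^[n+1] z / a ^ (n+1)
        = (a * f^[n] z - f (f^[n] z)) / a ^ (n+1) := by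
      rw [Function.iterate_succ_apply']
      field_simp
      ring
    rw [hrewrite, norm_div, norm_pow]
    rw [div_le_iff₀ (by positivity)]
    calc ‖a * f^[n] z - f (f^[n] z)‖ = ‖f (f^[n] z) - a * f^[n] z‖ := norm_sub_rev _ _
      _ ≤ C * (c ^ n * ‖z‖) ^ 2 := key
      _ = (C * ‖z‖ ^ 2) * (c ^ 2) ^ n := by ring
      _ ≤ (C * ‖z‖ ^ 2 / A) * q ^ n * ‖a‖ ^ (n+1) := by
          rw [hq, div_pow, ← hA]
          have hAn : (A:ℝ) ^ n ≠ 0 := pow_ne_zero _ hAne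
          have heq2 : C * ‖z‖ ^ 2 / A * ((c ^ 2) ^ n / A ^ n) * A ^ (n + 1)
              = (C * ‖z‖ ^ 2) * (c ^ 2) ^ n := by
            calc C * ‖z‖ ^ 2 / A * ((c ^ 2) ^ n / A ^ n) * A ^ (n + 1)
                = (C * ‖z‖ ^ 2 / A * A) * ((c ^ 2) ^ n / A ^ n * A ^ n) := by
                  rw [pow_succ]; ring
              _ = (C * ‖z‖ ^ 2) * (c ^ 2) ^ n := by
                  rw [div_mul_cancel₀ _ hAne, div_mul_cancel₀ _ hAn]
          rw [heq2]
  -- the limit function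
  set h : ℂ → ℂ := fun z => limUnder atTop (fun n => H n z) with hhdef
  have hcauchy : ∀ z : ℂ, ‖z‖ ≤ r → CauchySeq (fun n => H n z) := fun z hz =>
    cauchySeq_of_le_geometric q (C * ‖z‖ ^ 2 / A) hq1 (hgeom z hz)
  have htend : ∀ z : ℂ, ‖z‖ ≤ r → Tendsto (fun n => H n z) atTop (nhds (h z)) := fun z hz =>
    (hcauchy z hz).tendsto_limUnder
  have htail : ∀ z : ℂ, ‖z‖ ≤ r → ∀ n,
      dist (H n z) (h z) ≤ (C * ‖z‖ ^ 2 / A) * q ^ n / (1 - q) :=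
    fun z hz n => dist_le_of_le_geometric_of_tendsto q (C * ‖z‖ ^ 2 / A) hq1 (hgeom z hz) (htend z hz) n
  -- uniform convergence on the closed ball
  have hunif : TendstoUniformlyOn H h atTop (closedBall (0:ℂ) r) := by
    rw [Metric.tendstoUniformlyOn_iff]
    intro ε hε
    have hlim : Tendsto (fun n => (C * r ^ 2 / A) * q ^ n / (1 - q)) atTop (nhds 0) := by
      have := tendsto_pow_atTop_nhds_zero_of_lt_one hq0 hq1
      simpa using ((this.const_mul (C * r ^ 2 / A)).div_const (1 - q))
    filter_upwards [hlim.eventually (gt_mem_nhds hε)] with n hn z hzmem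
    have hz : ‖z‖ ≤ r := by simpa [dist_eq_norm] using hzmem
    have h1 : dist (H n z) (h z) ≤ (C * ‖z‖ ^ 2 / A) * q ^ n / (1 - q) := htail z hz n
    have h2 : (C * ‖z‖ ^ 2 / A) * q ^ n / (1 - q) ≤ (C * r ^ 2 / A) * q ^ n / (1 - q) := by
      have : ‖z‖ ^ 2 ≤ r ^ 2 := pow_le_pow_left₀ (norm_nonneg z) hz 2
      have hqn : (0:ℝ) ≤ q ^ n := pow_nonneg hq0 n
      gcongr
    rw [dist_comm]
    exact lt_of_le_of_lt (h1.trans h2) hn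
  -- differentiability of the iterates
  have hHdiff : ∀ n : ℕ, ∀ z ∈ ball (0:ℂ) r, DifferentiableAt ℂ (H n) z := by
    intro n
    have hId : ∀ m : ℕ, ∀ z : ℂ, ‖z‖ ≤ r → DifferentiableAt ℂ (f^[m]) z := by
      intro m
      induction m with
      | zero => intro z hz; simpa using differentiableAt_id'
      | succ m ih =>
        intro z hz
        rw [Function.iterate_succ']
        exact DifferentiableAt.comp z
          (hdiff _ ((hstay m z hz).trans hrr1)) (ih z hz)
    intro z hzmem
    have hz : ‖z‖ ≤ r := by
      have := mem_ball_iff_norm.mp hzmem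
      simpa using this.le
    exact (hId n z hz).div_const _
  -- h is analytic at 0
  have hhanal : AnalyticAt ℂ h 0 := by
    have htlu : TendstoLocallyUniformlyOn H h atTop (ball (0:ℂ) r) :=
      (hunif.tendstoLocallyUniformlyOn).mono ball_subset_closedBall
    have hdiffon : DifferentiableOn ℂ h (ball (0:ℂ) r) :=
      htlu.differentiableOn
        (Eventually.of_forall fun n => fun z hz => (hHdiff n z hz).differentiableWithinAt)
        isOpen_ball
    exact hdiffon.analyticAt (ball_mem_nhds 0 hrpos)
  -- h 0 = 0
  have hh0 : h 0 = 0 := by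
    have h1 : Tendsto (fun n => H n 0) atTop (nhds (h 0)) := htend 0 (by simp [hrpos.le])
    have h2 : (fun n => H n 0) = fun _ => (0:ℂ) := by
      funext n
      simp [hH, Function.iterate_fixed h0]
    rw [h2] at h1
    exact tendsto_nhds_unique h1 tendsto_const_nhds
  -- the functional equation
  have hfunc : ∀ z : ℂ, ‖z‖ ≤ r → h (f z) = a * h z := by
    intro z hz
    have hfzr : ‖f z‖ ≤ r := by
      have := hstay 1 z hz
      simpa using this
    have h1 : Tendsto (fun n => H n (f z)) atTop (nhds (h (f z))) := htend _ hfzr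
    have h2 : (fun n => H n (f z)) = fun n => a * H (n + 1) z := by
      funext n
      rw [hH]
      simp only
      rw [← Function.iterate_succ_apply, pow_succ]
      field_simp
    rw [h2] at h1
    have h3 : Tendsto (fun n => a * H (n + 1) z) atTop (nhds (a * h z)) :=
      ((htend z hz).comp (tendsto_add_atTop_nat 1)).const_mul a
    exact tendsto_nhds_unique h1 h3
  -- the derivative of h at 0 is 1
  have hK : (0:ℝ) < C / A / (1 - q) := by positivity
  set K : ℝ := C / A / (1 - q) with hKdef
  have hhz : ∀ z : ℂ, ‖z‖ ≤ r → ‖h z - z‖ ≤ K * ‖z‖ ^ 2 := by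
    intro z hz
    have h1 := htail z hz 0
    have h2 : H 0 z = z := by simp [hH]
    rw [h2, pow_zero, mul_one, dist_eq_norm, ← norm_sub_rev] at h1
    calc ‖h z - z‖ ≤ C * ‖z‖ ^ 2 / A / (1 - q) := h1
      _ = K * ‖z‖ ^ 2 := by rw [hKdef]; field_simp
  have hd1 : HasDerivAt h 1 0 := by
    rw [hasDerivAt_iff_isLittleO]
    rw [Asymptotics.isLittleO_iff]
    intro ε hε
    have hmem : closedBall (0:ℂ) (min r (ε / K)) ∈ nhds (0:ℂ) :=
      closedBall_mem_nhds 0 (lt_min hrpos (by positivity))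
    filter_upwards [hmem] with z hzmem
    have hz1 : ‖z‖ ≤ min r (ε / K) := by simpa [dist_eq_norm] using hzmem
    have hz2 : ‖z‖ ≤ r := hz1.trans (min_le_left _ _)
    have hz3 : ‖z‖ ≤ ε / K := hz1.trans (min_le_right _ _)
    have hb := hhz z hz2
    simp only [hh0, sub_zero, smul_eq_mul, mul_one]
    calc ‖h z - z‖ ≤ K * ‖z‖ ^ 2 := hb
      _ = K * ‖z‖ * ‖z‖ := by ring
      _ ≤ K * (ε / K) * ‖z‖ := by
          have := mul_le_mul_of_nonneg_left hz3 hK.le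
          nlinarith [norm_nonneg z]
      _ = ε * ‖z‖ := by
          rw [mul_div_cancel₀ _ (ne_of_gt hK)]
  have hderiv : deriv h 0 = 1 := hd1.deriv
  refine ⟨h, hhanal, hh0, by rw [hderiv]; exact one_ne_zero, ?_⟩
  filter_upwards [closedBall_mem_nhds (0:ℂ) hrpos] with z hzmem
  exact hfunc z (by simpa [dist_eq_norm] using hzmem)

/-- **Koenigs' linearization theorem.** If `f` is a germ at `0` of a holomorphic
diffeomorphism fixing `0` with multiplier `a = f'(0)`, `|a| ≠ 1` and `a ≠ 0`, then `f`
is analytically linearizable: there is a germ `h` of holomorphic diffeomorphism fixing `0`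
with `h ∘ f ∘ h⁻¹ (z) = a z`, i.e. `h(f(z)) = a · h(z)` near `0`. -/
theorem stmt4 (f : ℂ → ℂ) (hf : AnalyticAt ℂ f 0) (h0 : f 0 = 0)
    (a : ℂ) (ha : deriv f 0 = a) (haval : ‖a‖ ≠ 1) (ha0 : a ≠ 0) :
    ∃ h : ℂ → ℂ, AnalyticAt ℂ h 0 ∧ h 0 = 0 ∧ deriv h 0 ≠ 0 ∧
      ∀ᶠ z in nhds (0 : ℂ), h (f z) = a * h z := by
  have hnorm : ‖a‖ ≠ 1 := haval
  rcases lt_or_gt_of_ne hnorm with hlt | hgt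
  · exact koenigs_lt f hf h0 a ha hlt ha0
  -- case ‖a‖ > 1 : pass to the local inverse
  · obtain ⟨p, hp⟩ := hf
    have hsd : HasStrictDerivAt f a 0 := by
      have h1 := hp.hasStrictDerivAt
      have h2 : (p 1 fun _ => 1) = a := by rw [← hp.deriv, ha]
      rwa [h2] at h1
    have hFD : HasStrictFDerivAt f (ContinuousLinearEquiv.unitsEquivAut ℂ (Units.mk0 a ha0) : ℂ →L[ℂ] ℂ) 0 :=
      hsd.hasStrictFDerivAt_equiv ha0
    set Φ := hFD.toOpenPartialHomeomorph f with hΦ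
    have hΦcoe : (Φ : ℂ → ℂ) = f := hFD.toOpenPartialHomeomorph_coe
    have h0source : (0:ℂ) ∈ Φ.source := hFD.mem_toOpenPartialHomeomorph_source
    have h0target : (0:ℂ) ∈ Φ.target := by
      have := hFD.image_mem_toOpenPartialHomeomorph_target
      rwa [h0] at this
    have hsymm0 : Φ.symm 0 = 0 := by
      have := Φ.left_inv h0source
      rw [hΦcoe] at this  -- careful
      rwa [h0] at this
    set g : ℂ → ℂ := ⇑Φ.symm with hg
    -- g is differentiable near 0
    have hganal : AnalyticAt ℂ g 0 := by
      have hderivcont : ContinuousAt (deriv f) 0 := by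
        have h1 := hp.analyticAt.eventually_analyticAt
        rw [Metric.eventually_nhds_iff] at h1
        obtain ⟨ε, hε, hh⟩ := h1
        have hON : AnalyticOnNhd ℂ f (Metric.ball 0 ε) := fun y hy => hh (by
          simpa [dist_eq_norm] using mem_ball_iff_norm.mp hy)
        exact (hON.deriv 0 (by simpa using hε)).continuousAt
      have hne : ∀ᶠ w in nhds (0:ℂ), deriv f w ≠ 0 := by
        have : deriv f 0 ≠ 0 := by rw [ha]; exact ha0
        exact hderivcont.eventually_ne this
      have hdiffev : ∀ᶠ w in nhds (0:ℂ), DifferentiableAt ℂ f w :=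
        hp.analyticAt.eventually_analyticAt.mono fun w hw => hw.differentiableAt
      have hE : {w : ℂ | DifferentiableAt ℂ f w ∧ deriv f w ≠ 0} ∈ nhds (0:ℂ) :=
        hdiffev.and hne
      have hsymmcont : ContinuousAt g 0 := Φ.continuousAt_symm h0target
      have hpre : g ⁻¹' {w : ℂ | DifferentiableAt ℂ f w ∧ deriv f w ≠ 0} ∈ nhds (0:ℂ) := by
        apply hsymmcont.preimage_mem_nhds
        rwa [hsymm0]
      have hV : ∀ᶠ w in nhds (0:ℂ), DifferentiableAt ℂ g w := by
        filter_upwards [Φ.open_target.mem_nhds h0target, hpre] with w hw1 hw2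
        have hda : HasDerivAt g (deriv f (g w))⁻¹ w := by
          apply Φ.hasDerivAt_symm hw1 hw2.2
          have := hw2.1.hasDerivAt
          rwa [hΦcoe]
        exact hda.differentiableAt
      rw [Metric.eventually_nhds_iff] at hV
      obtain ⟨ε, hε, hh⟩ := hV
      have : DifferentiableOn ℂ g (Metric.ball 0 ε) := fun y hy =>
        (hh (by simpa [dist_eq_norm] using mem_ball_iff_norm.mp hy)).differentiableWithinAt
      exact this.analyticAt (Metric.ball_mem_nhds 0 hε)
    have hgd : HasStrictDerivAt g a⁻¹ 0 := by
      have := hsd.to_localInverse (hf' := ha0)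
      rwa [h0] at this
    have hgderiv : deriv g 0 = a⁻¹ := hgd.hasDerivAt.deriv
    have hglt : ‖a⁻¹‖ < 1 := by
      rw [norm_inv]
      rw [inv_lt_one_iff₀]
      right; exact hgt
    obtain ⟨h, hhanal, hh0, hhderiv, hheq⟩ :=
      koenigs_lt g hganal hsymm0 a⁻¹ hgderiv hglt (inv_ne_zero ha0)
    refine ⟨h, hhanal, hh0, hhderiv, ?_⟩
    have hleft : ∀ᶠ z in nhds (0:ℂ), g (f z) = z := by
      have := hFD.eventually_left_inverse
      exact this
    have hWpre : ∀ᶠ z in nhds (0:ℂ), h (g (f z)) = a⁻¹ * h (f z) := by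
      have hcont : ContinuousAt f 0 := hp.analyticAt.continuousAt
      have := hcont.preimage_mem_nhds (by rw [h0]; exact hheq)
      exact this
    filter_upwards [hleft, hWpre] with z h1 h2
    rw [h1] at h2
    rw [h2, ← mul_assoc, mul_inv_cancel₀ ha0, one_mul]
end

section
/- If f and g are germs at 0 ∈ ℂ² of holomorphic functions that are both reduced equations of {y=0} (i.e., f = y·u, g = y·v with u, v units), and the 2-form df∧dg has zero divisor exactly {y=0} with multiplicity one, then there exist unique local coordinates (x̃, ỹ) with (x̃,ỹ)|_{y=0} = (x,0) such that f = ỹ and g = e^{u(x̃)} ỹ for a function u with u'(0) ≠ 0, u being unique modulo 2πi. -/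
open Filter

lemma analytic_local_inverse {F : ℂ → ℂ} {a : ℂ} (hF : AnalyticAt ℂ F a) (hd : deriv F a ≠ 0) :
    ∃ G : ℂ → ℂ, AnalyticAt ℂ G (F a) ∧ (∀ᶠ x in nhds a, G (F x) = x) ∧
      (∀ᶠ y in nhds (F a), F (G y) = y) := by
  set i : ℂ ≃L[ℂ] ℂ := ContinuousLinearEquiv.unitsEquivAut ℂ (Units.mk0 (deriv F a) hd) with hi
  have hieq : (i : ℂ →L[ℂ] ℂ) = fderiv ℂ F a := by
    apply ContinuousLinearMap.ext_ring
    simp [hi, ContinuousLinearEquiv.unitsEquivAut, fderiv_apply_one_eq_deriv]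
  have hstrict : HasStrictFDerivAt F (i : ℂ →L[ℂ] ℂ) a := by
    rw [hieq]; exact hF.hasStrictFDerivAt
  refine ⟨hstrict.localInverse F _ a, ?_, hstrict.eventually_left_inverse,
    hstrict.eventually_right_inverse⟩
  rw [HasStrictFDerivAt.localInverse_def]
  have h0 := hstrict.mem_toOpenPartialHomeomorph_source
  have hcoe := hstrict.toOpenPartialHomeomorph_coe
  have : F a = (hstrict.toOpenPartialHomeomorph F) a := by rw [hcoe]
  rw [this]
  refine OpenPartialHomeomorph.analyticAt_symm' _ (i := i) h0 ?_ ?_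
  · rw [hcoe]; exact hF
  · rw [hcoe, hieq]

/-- Let `f, g` be germs at `0 ∈ ℂ²` of holomorphic functions, both reduced equations
of `C = {y = 0}` (`f = y·u`, `g = y·v` with `u, v` units), such that the divisor of
`df ∧ dg = J·dx∧dy` is exactly `{y=0}` with multiplicity one (`J = y·w`, `w(0) ≠ 0`).
Then there is a unique pair: an analytic coordinate `x̃` restricting to `x` on `C`
(together with `ỹ := f`), and a submersive function `U`, unique modulo `2πi`, such
that `f = ỹ` and `g = e^{U(x̃)}·ỹ` near `0`. -/
theorem stmt8 (f g u v w : ℂ × ℂ → ℂ)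
    (hf : AnalyticAt ℂ f 0) (hg : AnalyticAt ℂ g 0)
    (hu : AnalyticAt ℂ u 0) (hv : AnalyticAt ℂ v 0)
    (hu0 : u 0 ≠ 0) (hv0 : v 0 ≠ 0)
    (hfy : ∀ᶠ p in nhds (0 : ℂ × ℂ), f p = p.2 * u p)
    (hgy : ∀ᶠ p in nhds (0 : ℂ × ℂ), g p = p.2 * v p)
    (hw : AnalyticAt ℂ w 0) (hw0 : w 0 ≠ 0)
    (hJ : ∀ᶠ p in nhds (0 : ℂ × ℂ),
      fderiv ℂ f p (1, 0) * fderiv ℂ g p (0, 1)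
        - fderiv ℂ f p (0, 1) * fderiv ℂ g p (1, 0) = p.2 * w p) :
    ∃ xt : ℂ × ℂ → ℂ, ∃ U : ℂ → ℂ,
      AnalyticAt ℂ xt 0 ∧ AnalyticAt ℂ U 0 ∧ deriv U 0 ≠ 0 ∧
      (∀ᶠ x in nhds (0 : ℂ), xt (x, 0) = x) ∧
      (∀ᶠ p in nhds (0 : ℂ × ℂ), g p = Complex.exp (U (xt p)) * f p) ∧
      (∀ xt' U', AnalyticAt ℂ xt' 0 → AnalyticAt ℂ U' 0 → deriv U' 0 ≠ 0 →
        (∀ᶠ x in nhds (0 : ℂ), xt' (x, 0) = x) →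
        (∀ᶠ p in nhds (0 : ℂ × ℂ), g p = Complex.exp (U' (xt' p)) * f p) →
        (∀ᶠ p in nhds (0 : ℂ × ℂ), xt' p = xt p) ∧
        ∃ n : ℤ, ∀ᶠ x in nhds (0 : ℂ), U' x = U x + 2 * Real.pi * Complex.I * n) := by
  classical
  set h : ℂ × ℂ → ℂ := fun p => v p / u p with hdef
  have hh : AnalyticAt ℂ h 0 := hv.div hu hu0
  have hh0 : h 0 ≠ 0 := div_ne_zero hv0 hu0
  set L : ℂ × ℂ → ℂ := fun p => Complex.log (h p / h 0) + Complex.log (h 0) with hLdef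
  have hL : AnalyticAt ℂ L 0 := by
    apply AnalyticAt.add
    · refine (hh.div analyticAt_const hh0).clog ?_
      show h 0 / h 0 ∈ Complex.slitPlane
      rw [div_self hh0]
      exact Complex.one_mem_slitPlane
    · exact analyticAt_const
  have hune : ∀ᶠ p in nhds (0 : ℂ × ℂ), u p ≠ 0 := hu.continuousAt.eventually_ne hu0
  have hhne : ∀ᶠ p in nhds (0 : ℂ × ℂ), h p ≠ 0 := hh.continuousAt.eventually_ne hh0
  have hexpL : ∀ᶠ p in nhds (0 : ℂ × ℂ), Complex.exp (L p) = h p := by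
    filter_upwards [hhne] with p hp
    rw [hLdef]
    rw [Complex.exp_add, Complex.exp_log (div_ne_zero hp hh0), Complex.exp_log hh0]
    field_simp
  have hgfh : ∀ᶠ p in nhds (0 : ℂ × ℂ), g p = f p * h p := by
    filter_upwards [hfy, hgy, hune] with p h1 h2 h3
    rw [h1, h2, hdef]
    field_simp
  have hgf : ∀ᶠ p in nhds (0 : ℂ × ℂ), g p = Complex.exp (L p) * f p := by
    filter_upwards [hgfh, hexpL] with p h1 h2
    rw [h1, h2]; ring
  -- the Jacobian computation
  set K : ℂ × ℂ → ℂ := fun p =>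
    fderiv ℂ f p (1, 0) * fderiv ℂ h p (0, 1) - fderiv ℂ f p (0, 1) * fderiv ℂ h p (1, 0)
    with hKdef
  have hKrel : ∀ᶠ p in nhds (0 : ℂ × ℂ), p.2 * w p = f p * K p := by
    filter_upwards [hJ, hgfh.eventually_nhds, hf.eventually_analyticAt,
      hh.eventually_analyticAt] with p hJp hgfp hfp hhp
    have hgd : fderiv ℂ g p = f p • fderiv ℂ h p + h p • fderiv ℂ f p := by
      have h1 : fderiv ℂ g p = fderiv ℂ (fun q => f q * h q) p :=
        Filter.EventuallyEq.fderiv_eq hgfp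
      rw [h1, fderiv_fun_mul hfp.differentiableAt hhp.differentiableAt]
    rw [← hJp, hgd, hKdef]
    simp only [ContinuousLinearMap.add_apply, ContinuousLinearMap.coe_smul', Pi.smul_apply,
      smul_eq_mul]
    ring
  set C : ℂ × ℂ → ℂ := fun p => w p - u p * K p with hCdef
  have hCzero : ∀ᶠ p in nhds (0 : ℂ × ℂ), p.2 * C p = 0 := by
    filter_upwards [hKrel, hfy] with p h1 h2
    rw [hCdef]
    simp only
    rw [mul_sub]
    rw [h1, h2]
    ring
  have hCcont : ContinuousAt C 0 := by
    have happ : ∀ (F : ℂ × ℂ → ℂ) (c : ℂ × ℂ), AnalyticAt ℂ F 0 →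
        ContinuousAt (fun p => fderiv ℂ F p c) 0 := by
      intro F c hF
      exact (isBoundedBilinearMap_apply.continuous.continuousAt).comp
        ((hF.fderiv.continuousAt).prodMk continuousAt_const)
    refine (hw.continuousAt).sub (hu.continuousAt.mul ?_)
    exact (((happ f _ hf).mul (happ h _ hh)).sub ((happ f _ hf).mul (happ h _ hh)))
  have hC0 : C 0 = 0 := by
    have ht : Tendsto (fun t : ℂ => ((0 : ℂ), t)) (nhdsWithin (0 : ℂ) {(0 : ℂ)}ᶜ)
        (nhds (0 : ℂ × ℂ)) := by
      apply Tendsto.mono_left _ nhdsWithin_le_nhds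
      have : Tendsto (fun t : ℂ => ((0 : ℂ), t)) (nhds 0) (nhds ((0 : ℂ), (0 : ℂ))) :=
        (Continuous.prodMk_right (0 : ℂ)).tendsto 0
      simpa [Prod.mk_zero_zero] using this
    have hev : ∀ᶠ t in nhdsWithin (0 : ℂ) {(0 : ℂ)}ᶜ, C ((0 : ℂ), t) = 0 := by
      filter_upwards [ht.eventually hCzero, self_mem_nhdsWithin] with t h1 h2
      rcases mul_eq_zero.mp h1 with h | h
      · exact absurd h h2
      · exact h
    have h1 : Tendsto (fun t : ℂ => C ((0 : ℂ), t)) (nhdsWithin (0 : ℂ) {(0 : ℂ)}ᶜ)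
        (nhds (C 0)) := (hCcont.tendsto).comp ht
    have h2 : Tendsto (fun t : ℂ => C ((0 : ℂ), t)) (nhdsWithin (0 : ℂ) {(0 : ℂ)}ᶜ)
        (nhds 0) := Tendsto.congr' (Filter.EventuallyEq.symm hev) tendsto_const_nhds
    exact tendsto_nhds_unique h1 h2
  -- fderiv of f at 0
  have hDf : fderiv ℂ f 0 = (0 : ℂ × ℂ).2 • fderiv ℂ u 0
      + u 0 • ContinuousLinearMap.snd ℂ ℂ ℂ := by
    have h2 : HasFDerivAt (fun p : ℂ × ℂ => p.2 * u p)
        ((0 : ℂ × ℂ).2 • fderiv ℂ u 0 + u 0 • ContinuousLinearMap.snd ℂ ℂ ℂ) 0 :=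
      (hasFDerivAt_snd).mul (hu.differentiableAt.hasFDerivAt)
    rw [Filter.EventuallyEq.fderiv_eq hfy]
    exact h2.fderiv
  have hDf1 : fderiv ℂ f 0 (1, 0) = 0 := by simp [hDf]
  have hDf2 : fderiv ℂ f 0 (0, 1) = u 0 := by simp [hDf]
  have hD1h : fderiv ℂ h 0 (1, 0) ≠ 0 := by
    intro hz
    apply hw0
    have h0 : w 0 - u 0 * K 0 = 0 := hC0
    rw [hKdef] at h0
    simp only [hDf1, hDf2, hz, mul_zero, zero_mul, sub_zero, zero_sub, mul_neg] at h0
    linear_combination h0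
  -- the coordinate change on the x-axis
  set U : ℂ → ℂ := fun x => L (x, 0) with hUdef
  have hiota : AnalyticAt ℂ (fun x : ℂ => ((x, 0) : ℂ × ℂ)) 0 :=
    (analyticAt_id).prod analyticAt_const
  have hU : AnalyticAt ℂ U 0 :=
    AnalyticAt.comp_of_eq hL hiota Prod.mk_zero_zero
  have htiota : Tendsto (fun x : ℂ => ((x, 0) : ℂ × ℂ)) (nhds 0) (nhds 0) := by
    have : Tendsto (fun x : ℂ => ((x, 0) : ℂ × ℂ)) (nhds 0) (nhds ((0 : ℂ), (0 : ℂ))) :=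
      (continuous_id.prodMk continuous_const).tendsto 0
    simpa [Prod.mk_zero_zero] using this
  have hexpU : ∀ᶠ x in nhds (0 : ℂ), Complex.exp (U x) = h (x, 0) :=
    htiota.eventually hexpL
  have hdU : deriv U 0 ≠ 0 := by
    have h1 : HasDerivAt (fun x => Complex.exp (U x)) (Complex.exp (U 0) * deriv U 0) 0 :=
      (hU.differentiableAt.hasDerivAt).cexp
    have h2 : HasDerivAt (fun x : ℂ => h (x, 0)) (fderiv ℂ h 0 (1, 0)) 0 := by
      have hι : HasDerivAt (fun x : ℂ => ((x, 0) : ℂ × ℂ)) ((1 : ℂ), (0 : ℂ)) 0 :=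
        (hasDerivAt_id 0).prodMk (hasDerivAt_const 0 0)
      have hhd : HasFDerivAt h (fderiv ℂ h 0) 0 := hh.differentiableAt.hasFDerivAt
      exact HasFDerivAt.comp_hasDerivAt_of_eq 0 hhd hι Prod.mk_zero_zero
    have heq : deriv (fun x => Complex.exp (U x)) 0 = deriv (fun x : ℂ => h (x, 0)) 0 :=
      Filter.EventuallyEq.deriv_eq hexpU
    rw [h1.deriv, h2.deriv] at heq
    intro hz
    rw [hz, mul_zero] at heq
    exact hD1h heq.symm
  -- local inverse
  obtain ⟨G, hG, hGl, hGr⟩ := analytic_local_inverse hU hdU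
  have hL0 : L 0 = U 0 := by rw [hUdef]; simp [Prod.mk_zero_zero]
  set xt : ℂ × ℂ → ℂ := fun p => G (L p) with hxtdef
  have hxt : AnalyticAt ℂ xt 0 := by
    have : AnalyticAt ℂ G (L 0) := by rw [hL0]; exact hG
    exact this.comp hL
  have hxtres : ∀ᶠ x in nhds (0 : ℂ), xt (x, 0) = x := hGl
  have hUxt : ∀ᶠ p in nhds (0 : ℂ × ℂ), U (xt p) = L p := by
    have htL : Tendsto L (nhds (0 : ℂ × ℂ)) (nhds (U 0)) := by
      rw [← hL0]; exact hL.continuousAt.tendsto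
    exact htL.eventually hGr
  have hmain : ∀ᶠ p in nhds (0 : ℂ × ℂ), g p = Complex.exp (U (xt p)) * f p := by
    filter_upwards [hgf, hUxt] with p h1 h2
    rw [h2]; exact h1
  refine ⟨xt, U, hxt, hU, hdU, hxtres, hmain, ?_⟩
  -- uniqueness
  intro xt' U' hxt'an hU'an hdU' hx'0 hg'
  have hxt'0 : xt' 0 = 0 := by
    have := hx'0.self_of_nhds
    simpa [Prod.mk_zero_zero] using this
  set φ : ℂ × ℂ → ℂ := fun p => U' (xt' p) - L p with hφdef
  have hφan : ∀ᶠ p in nhds (0 : ℂ × ℂ), AnalyticAt ℂ φ p := by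
    have h1 : ∀ᶠ p in nhds (0 : ℂ × ℂ), AnalyticAt ℂ U' (xt' p) := by
      have ht : Tendsto xt' (nhds (0 : ℂ × ℂ)) (nhds 0) := by
        have := hxt'an.continuousAt.tendsto
        rwa [hxt'0] at this
      exact ht.eventually hU'an.eventually_analyticAt
    filter_upwards [h1, hxt'an.eventually_analyticAt, hL.eventually_analyticAt]
      with p hp1 hp2 hp3
    exact (hp1.comp hp2).sub hp3
  have hbig : ∀ᶠ p in nhds (0 : ℂ × ℂ),
      (g p = Complex.exp (U' (xt' p)) * f p) ∧ (g p = Complex.exp (L p) * f p) ∧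
      (f p = p.2 * u p) ∧ (u p ≠ 0) ∧ AnalyticAt ℂ φ p := by
    filter_upwards [hg', hgf, hfy, hune, hφan] with p a b c d e
    exact ⟨a, b, c, d, e⟩
  rw [Metric.eventually_nhds_iff] at hbig
  obtain ⟨r, hr, hB⟩ := hbig
  set B : Set (ℂ × ℂ) := Metric.ball (0 : ℂ × ℂ) r with hBdef
  have hBmem : ∀ p ∈ B, (g p = Complex.exp (U' (xt' p)) * f p) ∧
      (g p = Complex.exp (L p) * f p) ∧
      (f p = p.2 * u p) ∧ (u p ≠ 0) ∧ AnalyticAt ℂ φ p := by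
    intro p hp
    exact hB hp
  have h0B : (0 : ℂ × ℂ) ∈ B := Metric.mem_ball_self hr
  have hBnhds : B ∈ nhds (0 : ℂ × ℂ) := Metric.ball_mem_nhds 0 hr
  -- exp φ = 1 on B
  have hexpφ1 : ∀ p ∈ B, Complex.exp (φ p) = 1 := by
    have key : ∀ p ∈ B, p.2 ≠ 0 → Complex.exp (φ p) = 1 := by
      intro p hp hp2
      obtain ⟨a, b, c, d, _⟩ := hBmem p hp
      have hfne : f p ≠ 0 := by rw [c]; exact mul_ne_zero hp2 d
      have : Complex.exp (U' (xt' p)) = Complex.exp (L p) := by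
        have := a.symm.trans b
        exact mul_right_cancel₀ hfne this
      rw [hφdef]
      simp only
      rw [Complex.exp_sub, this, div_self (Complex.exp_ne_zero _)]
    intro p hp
    have hnb : (nhdsWithin p.2 {(0 : ℂ)}ᶜ).NeBot :=
      mem_closure_iff_nhdsWithin_neBot.mp ((dense_compl_singleton (0 : ℂ)) p.2)
    have ht : Tendsto (fun t : ℂ => ((p.1, t) : ℂ × ℂ)) (nhdsWithin p.2 {(0 : ℂ)}ᶜ)
        (nhds p) := by
      apply Tendsto.mono_left _ nhdsWithin_le_nhds
      exact (Continuous.prodMk_right p.1).tendsto p.2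
    have hevB : ∀ᶠ t in nhdsWithin p.2 {(0 : ℂ)}ᶜ, ((p.1, t) : ℂ × ℂ) ∈ B :=
      ht.eventually (Metric.isOpen_ball.mem_nhds hp)
    have hev1 : ∀ᶠ t in nhdsWithin p.2 {(0 : ℂ)}ᶜ, Complex.exp (φ (p.1, t)) = 1 := by
      filter_upwards [hevB, self_mem_nhdsWithin] with t h1 h2
      exact key (p.1, t) h1 h2
    have hcont : ContinuousAt (fun q => Complex.exp (φ q)) p :=
      Complex.continuous_exp.continuousAt.comp ((hBmem p hp).2.2.2.2.continuousAt)
    have h1 : Tendsto (fun t : ℂ => Complex.exp (φ (p.1, t)))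
        (nhdsWithin p.2 {(0 : ℂ)}ᶜ) (nhds (Complex.exp (φ p))) := hcont.tendsto.comp ht
    have h2 : Tendsto (fun t : ℂ => Complex.exp (φ (p.1, t)))
        (nhdsWithin p.2 {(0 : ℂ)}ᶜ) (nhds 1) :=
      Tendsto.congr' (Filter.EventuallyEq.symm hev1) tendsto_const_nhds
    exact tendsto_nhds_unique h1 h2
  -- φ is constant on B
  have hφconst : ∀ p ∈ B, φ p = φ 0 := by
    have hfd : ∀ p ∈ B, fderiv ℂ φ p = 0 := by
      intro p hp
      have hev : (fun q => Complex.exp (φ q)) =ᶠ[nhds p] fun _ => (1 : ℂ) := by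
        filter_upwards [Metric.isOpen_ball.mem_nhds hp] with q hq
        exact hexpφ1 q hq
      have h1 : HasFDerivAt (fun q => Complex.exp (φ q))
          (Complex.exp (φ p) • fderiv ℂ φ p) p :=
        ((hBmem p hp).2.2.2.2.differentiableAt.hasFDerivAt).cexp
      have h2 : fderiv ℂ (fun q => Complex.exp (φ q)) p = 0 := by
        rw [Filter.EventuallyEq.fderiv_eq hev]
        exact fderiv_const_apply _
      rw [h1.fderiv] at h2
      rcases (smul_eq_zero (M := ℂ × ℂ →L[ℂ] ℂ)).mp h2 with hc | hc
      · exact absurd hc (Complex.exp_ne_zero _)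
      · exact hc
    intro p hp
    refine (convex_ball _ _).is_const_of_fderivWithin_eq_zero
      (fun q hq => ((hBmem q hq).2.2.2.2).differentiableAt.differentiableWithinAt)
      (fun q hq => ?_) hp h0B
    rw [fderivWithin_of_isOpen Metric.isOpen_ball hq]
    exact hfd q hq
  have hφ0 : ∃ n : ℤ, φ 0 = n * (2 * Real.pi * Complex.I) :=
    Complex.exp_eq_one_iff.mp (hexpφ1 0 h0B)
  obtain ⟨n, hn⟩ := hφ0
  have hφx : ∀ᶠ x in nhds (0 : ℂ), U' x = U x + φ 0 := by
    have hevB : ∀ᶠ x in nhds (0 : ℂ), ((x, 0) : ℂ × ℂ) ∈ B := htiota.eventually hBnhds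
    filter_upwards [hevB, hx'0] with x h1 h2
    have := hφconst (x, 0) h1
    rw [hφdef] at this
    simp only [h2] at this
    have hUx : L ((x : ℂ), (0 : ℂ)) = U x := rfl
    rw [hUx] at this
    linear_combination this
  constructor
  · -- xt' = xt eventually
    have htxt' : Tendsto xt' (nhds (0 : ℂ × ℂ)) (nhds 0) := by
      have := hxt'an.continuousAt.tendsto
      rwa [hxt'0] at this
    have hA : ∀ᶠ p in nhds (0 : ℂ × ℂ), U' (xt' p) = U (xt' p) + φ 0 :=
      htxt'.eventually hφx
    have hGU : ∀ᶠ p in nhds (0 : ℂ × ℂ), G (U (xt' p)) = xt' p := htxt'.eventually hGl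
    have hφB : ∀ᶠ p in nhds (0 : ℂ × ℂ), φ p = φ 0 := by
      filter_upwards [hBnhds] with p hp using hφconst p hp
    filter_upwards [hA, hGU, hφB] with p h1 h2 h3
    have hULp : U (xt' p) = L p := by
      have : U' (xt' p) - L p = φ 0 := h3
      rw [h1] at this
      linear_combination this
    rw [hxtdef]
    simp only
    rw [← hULp, h2]
  · refine ⟨n, ?_⟩
    filter_upwards [hφx] with x hx
    rw [hx, hn]
    push_cast
    ring
end
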